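/- Let E ⊆ Ω be an event such that, for some continuous martingale M = (M_t)_{t∈[0,∞)} on some filtered probability space, the sample path t ↦ M_t belongs to E almost surely. Then P̄(E) = 1. -/

import Mathlib

open MeasureTheory Filter Set
open scoped ENNReal NNReal

noncomputable section

/-- The sample space: continuous functions `[0,∞) → ℝ`. -/
def Omega : Type := {f : ℝ≥0 → ℝ // Continuous f}

instance : CoeFun Omega fun _ => ℝ≥0 → ℝ := ⟨Subtype.val⟩

/-- The filtration `F t`: the smallest σ-algebra making `ω ↦ ω s` measurable for `s ≤ t`. -/
def F (t : ℝ≥0∞) : MeasurableSpace Omega :=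
  ⨆ (s : ℝ≥0) (_ : (s : ℝ≥0∞) ≤ t),
    MeasurableSpace.comap (fun ω : Omega => ω s) inferInstance

lemma F_mono : Monotone F := by
  intro s t hst
  refine iSup_mono fun u => ?_
  exact iSup_le fun hu => le_iSup_of_le (hu.trans hst) le_rfl

instance instMSOmega : MeasurableSpace Omega := F ⊤

/-- The filtration as a Mathlib `Filtration`. -/
def FF : Filtration ℝ≥0∞ instMSOmega where
  seq := F
  mono' := F_mono
  le' := fun t => F_mono le_top

/-- Evaluation of a path at an extended time (times `≥ ∞` are sent to `0`). -/
def evalE (ω : Omega) (t : ℝ≥0∞) : ℝ := ω t.toNNReal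

/-- A simple trading strategy. -/
structure SimpleStrategy where
  τ : ℕ → Omega → ℝ≥0∞
  bet : ℕ → Omega → ℝ
  isStopping : ∀ n, IsStoppingTime FF (fun ω => ((τ n ω : ℝ≥0∞) : WithTop ℝ≥0∞))
  mono : ∀ n ω, τ n ω ≤ τ (n + 1) ω
  tendsto_top : ∀ ω, Tendsto (fun n => τ n ω) atTop (nhds ⊤)
  bet_measurable : ∀ n, Measurable[(isStopping n).measurableSpace] (bet n)
  bet_bounded : ∀ n, ∃ C : ℝ, ∀ ω, |bet n ω| ≤ C

/-- The simple capital process of a simple trading strategy with initial capital `c`. -/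
def simpleCapital (G : SimpleStrategy) (c : ℝ) (t : ℝ≥0) (ω : Omega) : ℝ :=
  c + ∑' n : ℕ, G.bet n ω *
    (evalE ω (G.τ (n + 1) ω ⊓ (t : ℝ≥0∞)) - evalE ω (G.τ n ω ⊓ (t : ℝ≥0∞)))

/-- A positive capital process: a countable sum of nonnegative simple capital processes. -/
structure PositiveCapital where
  G : ℕ → SimpleStrategy
  c : ℕ → ℝ
  c_nonneg : ∀ n, 0 ≤ c n
  c_summable : Summable c
  nonneg : ∀ n (t : ℝ≥0) ω, 0 ≤ simpleCapital (G n) (c n) t ω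

/-- Value of a positive capital process at time `t` on path `ω`. -/
def PositiveCapital.val (S : PositiveCapital) (t : ℝ≥0) (ω : Omega) : ℝ≥0∞ :=
  ∑' n : ℕ, ENNReal.ofReal (simpleCapital (S.G n) (S.c n) t ω)

/-- Initial value of a positive capital process. -/
def PositiveCapital.init (S : PositiveCapital) : ℝ≥0∞ :=
  ∑' n : ℕ, ENNReal.ofReal (S.c n)

/-- Outer content of a set of paths. -/
def outerContent (E : Set Omega) : ℝ≥0∞ :=
  ⨅ (S : PositiveCapital)
    (_ : ∀ ω ∈ E, 1 ≤ liminf (fun t : ℝ≥0 => S.val t ω) atTop), S.init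

/-- Restricted outer content. -/
def outerContentOn (E B : Set Omega) : ℝ≥0∞ := outerContent (E ∩ B)

/-- Restricted inner content. -/
def innerContentOn (E B : Set Omega) : ℝ≥0∞ := 1 - outerContentOn Eᶜ B

/-- A time change: continuous, increasing, starting at `0`. -/
structure TimeChange where
  f : ℝ≥0 → ℝ≥0
  continuous : Continuous f
  monotone : Monotone f
  map_zero : f 0 = 0

/-- Action of a time change on a path. -/
def TimeChange.act (g : TimeChange) (ω : Omega) : Omega :=
  ⟨fun t => ω (g.f t), ω.2.comp g.continuous⟩

/-- A set of paths is time-superinvariant if `ω∘f ∈ E` implies `ω ∈ E` for all time changes. -/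
def TimeSuperinvariant (E : Set Omega) : Prop :=
  ∀ (ω : Omega) (g : TimeChange), g.act ω ∈ E → ω ∈ E

/-- `P` is the Wiener measure started at `c`. -/
def IsWiener (c : ℝ) (P : Measure Omega) : Prop :=
  IsProbabilityMeasure P ∧
  P {ω : Omega | ω 0 = c} = 1 ∧
  ∀ s t : ℝ≥0, s < t →
    ProbabilityTheory.Indep (F s)
      (MeasurableSpace.comap (fun ω : Omega => ω t - ω s) inferInstance) P ∧
    P.map (fun ω : Omega => ω t - ω s) = ProbabilityTheory.gaussianReal 0 (t - s)


def NowhereConstant (ω : Omega) : Prop :=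
  ∀ t₁ t₂ : ℝ≥0, t₁ < t₂ → ∃ s₁ ∈ Set.Ioo t₁ t₂, ∃ s₂ ∈ Set.Ioo t₁ t₂, ω s₁ ≠ ω s₂

/-- `ω` is divergent: it has no finite limit at infinity. -/
def Divergent (ω : Omega) : Prop :=
  ¬ ∃ c : ℝ, Tendsto (fun t => ω t) atTop (nhds c)

/-- The divergent and nowhere constant paths. -/
def DS : Set Omega := {ω | Divergent ω ∧ NowhereConstant ω}

/-- `ω` is constant on `[u,v]`. -/
def ConstOn (ω : Omega) (u v : ℝ≥0) : Prop := ∀ s ∈ Set.Icc u v, ω s = ω u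

/-- `t` is a point of increase of `ω`. -/
def PointOfIncrease (ω : Omega) (t : ℝ≥0) : Prop :=
  ∃ δ : ℝ≥0, 0 < δ ∧ ∀ t₁ t₂ : ℝ≥0, t - δ < t₁ → t₁ < t → t < t₂ → t₂ < t + δ →
    ω t₁ ≤ ω t ∧ ω t ≤ ω t₂

/-- `t` is a point of decrease of `ω`. -/
def PointOfDecrease (ω : Omega) (t : ℝ≥0) : Prop :=
  ∃ δ : ℝ≥0, 0 < δ ∧ ∀ t₁ t₂ : ℝ≥0, t - δ < t₁ → t₁ < t → t < t₂ → t₂ < t + δ →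
    ω t₁ ≥ ω t ∧ ω t ≥ ω t₂

/-- `ω` is locally constant to the right of `t`. -/
def LocallyConstantRight (ω : Omega) (t : ℝ≥0) : Prop :=
  ∃ δ : ℝ≥0, 0 < δ ∧ ∀ s ∈ Set.Icc t (t + δ), ω s = ω t

/-- The `p`-variation of `ω` over `[u,v]`. -/
def pVar (ω : Omega) (u v : ℝ≥0) (p : ℝ) : ℝ≥0∞ :=
  ⨆ (n : ℕ) (t : ℕ → ℝ≥0) (_ : Monotone t) (_ : t 0 = u) (_ : t n = v),
    ∑ i ∈ Finset.range n, ENNReal.ofReal (|ω (t (i + 1)) - ω (t i)| ^ p)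

/-- `ln* u = max(1, |ln u|)`. -/
def lnStar (u : ℝ) : ℝ := max 1 |Real.log u|

/-- Taylor's function `ψ(u) = u²/(2 ln* ln* u)`, with `ψ(0)=0`. -/
def taylorPsi (u : ℝ) : ℝ := if u = 0 then 0 else u ^ 2 / (2 * lnStar (lnStar u))

/-- The `φ`-variation of `ω` over `[0,T]`. -/
def phiVar (φ : ℝ → ℝ) (T : ℝ≥0) (ω : Omega) : ℝ≥0∞ :=
  ⨆ (n : ℕ) (t : ℕ → ℝ≥0) (_ : Monotone t) (_ : t 0 = 0) (_ : t n = T),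
    ∑ i ∈ Finset.range n, ENNReal.ofReal (φ |ω (t (i + 1)) - ω (t i)|)

/-- Taylor's quadratic variation `qvar_T(ω)`. -/
def qvar (T : ℝ≥0) (ω : Omega) : ℝ≥0∞ :=
  ⨅ (δ : ℝ) (_ : 0 < δ),
    ⨆ (n : ℕ) (t : ℕ → ℝ≥0) (_ : Monotone t) (_ : t 0 = 0) (_ : t n = T)
      (_ : ∀ i < n, (t (i + 1) : ℝ) - t i < δ),
      ∑ i ∈ Finset.range n, ENNReal.ofReal (taylorPsi |ω (t (i + 1)) - ω (t i)|)


/-- The dyadic grid `D_n`. -/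
def grid (n : ℕ) : Set ℝ := {x | ∃ k : ℤ, x = k * (2 : ℝ) ^ (-(n : ℤ))}

/-- Hitting times of the grid `D_n`: `hitT n k` is `T^n_{k-1}` of the paper (so `hitT n 0 = 0`). -/
def hitT (n : ℕ) : ℕ → Omega → ℝ≥0∞
  | 0, _ => 0
  | 1, ω => ⨅ (t : ℝ≥0) (_ : ω t ∈ grid n), (t : ℝ≥0∞)
  | (k + 2), ω =>
      ⨅ (t : ℝ≥0) (_ : hitT n (k + 1) ω ≤ (t : ℝ≥0∞) ∧ ω t ∈ grid n ∧
          ω t ≠ evalE ω (hitT n (k + 1) ω)), (t : ℝ≥0∞)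

/-- The approximating quadratic variation process `A^n_t`. -/
def Aproc (n : ℕ) (t : ℝ≥0) (ω : Omega) : ℝ≥0∞ :=
  ∑' k : ℕ, ENNReal.ofReal
    ((evalE ω (hitT n (k + 1) ω ⊓ (t : ℝ≥0∞)) - evalE ω (hitT n k ω ⊓ (t : ℝ≥0∞))) ^ 2)

/-- `Ā_t`. -/
def upA (t : ℝ≥0) (ω : Omega) : ℝ≥0∞ := limsup (fun n => Aproc n t ω) atTop

/-- `A̲_t`. -/
def lowA (t : ℝ≥0) (ω : Omega) : ℝ≥0∞ := liminf (fun n => Aproc n t ω) atTop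

/-- The stopping times `τ_s` used for the normalizing time change. -/
def tauQ (s : ℝ≥0) (ω : Omega) : ℝ≥0∞ :=
  ⨅ (t : ℝ≥0) (_ : (∀ u : ℝ≥0, u < t → upA u ω = lowA u ω ∧ upA u ω ≠ ⊤) ∧
      ContinuousOn (fun u : ℝ≥0 => (upA u ω).toReal) (Set.Iio t) ∧
      (⨆ u ∈ Set.Iio t, upA u ω) = (⨆ u ∈ Set.Iio t, lowA u ω) ∧
      (s : ℝ≥0∞) ≤ ⨆ u ∈ Set.Iio t, upA u ω),
    (t : ℝ≥0∞)

/-- The normalizing time change applied to `ω` (with `ω(∞) := 0`). -/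
def ntMap (ω : Omega) : ℝ≥0 → ℝ :=
  fun s => if tauQ s ω = ⊤ then 0 else ω (tauQ s ω).toNNReal

/-- Preimage of a set of paths under the normalizing time change. -/
def ntPre (E : Set Omega) : Set Omega :=
  {ω | ∃ hc : Continuous (ntMap ω), (⟨ntMap ω, hc⟩ : Omega) ∈ E}

/-- The event `A_∞ = ∞`. -/
def AInfty : Set Omega :=
  {ω | (∀ t : ℝ≥0, upA t ω = lowA t ω) ∧ Tendsto (fun t : ℝ≥0 => upA t ω) atTop (nhds ⊤)}




/-! ### Auxiliary development for Statement 15 -/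

section Aux15

variable {α : Type} {mα : MeasurableSpace α}

/-- The path map `a ↦ M · a`. -/
def Phi (M : ℝ≥0 → α → ℝ) (hcont : ∀ a, Continuous fun t => M t a) : α → Omega :=
  fun a => ⟨fun t => M t a, hcont a⟩

lemma measurableSet_F_pullback {M : ℝ≥0 → α → ℝ} {hcont : ∀ a, Continuous fun t => M t a}
    {𝒢 : ℝ≥0 → MeasurableSpace α}
    (hM : ∀ v : ℝ≥0, Measurable[𝒢 v] (M v)) (h𝒢 : Monotone 𝒢) (u : ℝ≥0)
    {A : Set Omega} (hA : MeasurableSet[F (u : ℝ≥0∞)] A) :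
    MeasurableSet[𝒢 u] (Phi M hcont ⁻¹' A) := by
  have hle : F (u : ℝ≥0∞) ≤ MeasurableSpace.map (Phi M hcont) (𝒢 u) := by
    refine iSup_le fun v => iSup_le fun hv => ?_
    rintro A ⟨B, hB, rfl⟩
    have hvu : v ≤ u := by exact_mod_cast hv
    have : Phi M hcont ⁻¹' ((fun ω : Omega => ω v) ⁻¹' B) = M v ⁻¹' B := rfl
    show MeasurableSet[𝒢 u] (Phi M hcont ⁻¹' _)
    rw [this]
    exact (h𝒢 hvu) _ (hM v hB)
  exact hle _ hA

lemma measurableSet_Ftop_pullback {M : ℝ≥0 → α → ℝ} {hcont : ∀ a, Continuous fun t => M t a}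
    (hM : ∀ v : ℝ≥0, Measurable[mα] (M v))
    {A : Set Omega} (hA : MeasurableSet[instMSOmega] A) :
    MeasurableSet[mα] (Phi M hcont ⁻¹' A) := by
  have hle : F ⊤ ≤ MeasurableSpace.map (Phi M hcont) mα := by
    refine iSup_le fun v => iSup_le fun _ => ?_
    rintro A ⟨B, hB, rfl⟩
    exact hM v hB
  exact hle _ hA

/-- The σ-algebra of a stopping time w.r.t. `FF` is below the ambient σ-algebra on `Omega`. -/
lemma stoppingSpace_le_top {τ : Omega → WithTop ℝ≥0∞} (hτ : IsStoppingTime FF τ) :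
    hτ.measurableSpace ≤ instMSOmega := by
  intro A hA
  exact (iSup_le fun t => FF.le t) _ ((hτ.measurableSet A).mp hA).1

lemma isStop' (G : SimpleStrategy) (n : ℕ) (s : ℝ≥0∞) :
    MeasurableSet[F s] {ω | G.τ n ω ≤ s} := by
  have h := G.isStopping n s
  simp only [WithTop.coe_le_coe] at h
  exact h

lemma stop_set {G : SimpleStrategy} {n : ℕ} {A : Set Omega}
    (hA : MeasurableSet[(G.isStopping n).measurableSpace] A) (s : ℝ≥0∞) :
    MeasurableSet[F s] (A ∩ {ω | G.τ n ω ≤ s}) := by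
  have h := ((IsStoppingTime.measurableSet (G.isStopping n) A).mp hA).2 s
  simp only [WithTop.coe_le_coe] at h
  exact h

/-- Dyadic upper rounding. -/
def dy (k : ℕ) (x : ℝ≥0) : ℝ≥0 := (⌈x * 2 ^ k⌉₊ : ℝ≥0) / 2 ^ k

lemma two_pow_pos (k : ℕ) : (0:ℝ≥0) < 2 ^ k := pow_pos two_pos k

lemma le_dy (k : ℕ) (x : ℝ≥0) : x ≤ dy k x := by
  rw [dy, le_div_iff₀ (two_pow_pos k)]
  exact Nat.le_ceil _

lemma dy_le_add_inv (k : ℕ) (x : ℝ≥0) : dy k x ≤ x + (2 ^ k : ℝ≥0)⁻¹ := by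
  rw [dy, div_le_iff₀ (two_pow_pos k)]
  calc (⌈x * 2 ^ k⌉₊ : ℝ≥0) ≤ x * 2 ^ k + 1 := (Nat.ceil_lt_add_one (by positivity)).le
    _ = (x + (2 ^ k : ℝ≥0)⁻¹) * 2 ^ k := by
        rw [add_mul, inv_mul_cancel₀ (two_pow_pos k).ne']

lemma dy_le_add_one (k : ℕ) (x : ℝ≥0) : dy k x ≤ x + 1 := by
  refine (dy_le_add_inv k x).trans (add_le_add_right ?_ x)
  have h1 : (1:ℝ≥0) ≤ 2 ^ k := one_le_pow₀ one_le_two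
  exact inv_le_one_of_one_le₀ h1

lemma dy_le_iff {k : ℕ} (x u : ℝ≥0) :
    dy k x ≤ (⌊u * 2 ^ k⌋₊ : ℝ≥0) / 2 ^ k ↔ x ≤ (⌊u * 2 ^ k⌋₊ : ℝ≥0) / 2 ^ k := by
  constructor
  · intro h
    exact (le_dy k x).trans h
  · intro h
    rw [dy, div_le_iff₀ (two_pow_pos k)]
    have hx : x * 2 ^ k ≤ (⌊u * 2 ^ k⌋₊ : ℝ≥0) := by
      rw [le_div_iff₀ (two_pow_pos k)] at h
      exact h
    calc (⌈x * 2 ^ k⌉₊ : ℝ≥0) ≤ (⌊u * 2 ^ k⌋₊ : ℝ≥0) := by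
          exact_mod_cast Nat.ceil_le.mpr hx
      _ ≤ (⌊u * 2 ^ k⌋₊ : ℝ≥0) / 2 ^ k * 2 ^ k := by
          rw [div_mul_cancel₀ _ (two_pow_pos k).ne']

lemma tendsto_dy (x : ℝ≥0) : Tendsto (fun k => dy k x) atTop (nhds x) := by
  refine tendsto_of_tendsto_of_tendsto_of_le_of_le (tendsto_const_nhds : Tendsto (fun _ : ℕ => x) atTop (nhds x))
    ?_ (fun k => le_dy k x) (fun k => dy_le_add_inv k x)
  have h2 : Tendsto (fun k : ℕ => ((2:ℝ≥0) ^ k)⁻¹) atTop (nhds 0) := by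
    simp_rw [← inv_pow]
    exact NNReal.tendsto_pow_atTop_nhds_zero_of_lt_one (NNReal.coe_lt_coe.mp (by norm_num))
  simpa using tendsto_const_nhds.add h2


variable {M : ℝ≥0 → α → ℝ} {μ : Measure α} {ℱ : Filtration ℝ≥0 mα}

lemma tau_mono (G : SimpleStrategy) (ω : Omega) : Monotone fun n => G.τ n ω :=
  monotone_nat_of_le_succ fun n => G.mono n ω

/-- Coercion of a `ℝ≥0`-valued time to `WithTop ℝ≥0`. -/
abbrev wt (f : α → ℝ≥0) : α → WithTop ℝ≥0 := fun a => (f a : WithTop ℝ≥0)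

/-- The stopped (real) times `τ_n ∧ t` along the path of `a`. -/
def rho (G : SimpleStrategy) (t : ℝ≥0) (hcont : ∀ a, Continuous fun s => M s a)
    (n : ℕ) (a : α) : ℝ≥0 :=
  (G.τ n (Phi M hcont a) ⊓ (t : ℝ≥0∞)).toNNReal

variable {G : SimpleStrategy} {t : ℝ≥0} {hcont : ∀ a, Continuous fun s => M s a}

lemma coe_rho (n : ℕ) (a : α) :
    (rho G t hcont n a : ℝ≥0∞) = G.τ n (Phi M hcont a) ⊓ (t : ℝ≥0∞) :=
  ENNReal.coe_toNNReal (ne_top_of_le_ne_top ENNReal.coe_ne_top (min_le_right _ _))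

lemma rho_le_t (n : ℕ) (a : α) : rho G t hcont n a ≤ t := by
  rw [← ENNReal.coe_le_coe, coe_rho]; exact min_le_right _ _

lemma rho_mono {n m : ℕ} (hnm : n ≤ m) (a : α) : rho G t hcont n a ≤ rho G t hcont m a := by
  rw [← ENNReal.coe_le_coe, coe_rho, coe_rho]
  exact inf_le_inf_right _ (tau_mono G _ hnm)

lemma isStoppingTime_rho (hada : StronglyAdapted ℱ M) (n : ℕ) :
    IsStoppingTime ℱ (wt (rho G t hcont n)) := by
  intro u
  simp only [wt, WithTop.coe_le_coe]
  by_cases htu : t ≤ u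
  · have : {a | rho G t hcont n a ≤ u} = Set.univ :=
      Set.eq_univ_of_forall fun a => (rho_le_t n a).trans htu
    rw [this]; exact MeasurableSet.univ
  · have : {a | rho G t hcont n a ≤ u} = Phi M hcont ⁻¹' {ω | G.τ n ω ≤ (u : ℝ≥0∞)} := by
      ext a
      simp only [Set.mem_setOf_eq, Set.mem_preimage]
      rw [← ENNReal.coe_le_coe, coe_rho]
      constructor
      · intro h
        rcases min_le_iff.mp h with h | h
        · exact h
        · exact absurd (ENNReal.coe_le_coe.mp h) htu
      · intro h
        exact le_trans (min_le_left _ _) h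
    rw [this]
    exact measurableSet_F_pullback (fun v => (hada v).measurable) ℱ.mono' u (isStop' G n _)

/-- Dyadic upper approximations of `rho`. -/
def sig (G : SimpleStrategy) (t : ℝ≥0) (hcont : ∀ a, Continuous fun s => M s a)
    (k n : ℕ) (a : α) : ℝ≥0 :=
  dy k (rho G t hcont n a)

/-- Largest dyadic point of level `k` below `u`. -/
def gpt (u : ℝ≥0) (k : ℕ) : ℝ≥0 := (⌊u * 2 ^ k⌋₊ : ℝ≥0) / 2 ^ k

lemma gpt_le (u : ℝ≥0) (k : ℕ) : gpt u k ≤ u := by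
  rw [gpt, div_le_iff₀ (two_pow_pos k)]
  exact Nat.floor_le (by positivity)

lemma dy_le_u_iff {k : ℕ} {x u : ℝ≥0} : dy k x ≤ u ↔ x ≤ gpt u k := by
  rw [dy, gpt, div_le_iff₀ (two_pow_pos k),
    le_div_iff₀ (two_pow_pos k)]
  rw [show ((⌈x * 2 ^ k⌉₊ : ℝ≥0) ≤ u * 2 ^ k ↔ ⌈x * 2 ^ k⌉₊ ≤ ⌊u * 2 ^ k⌋₊) from
    (Nat.le_floor_iff (by positivity)).symm]
  rw [Nat.ceil_le]

lemma sig_le_iff {k n : ℕ} {a : α} {u : ℝ≥0} :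
    sig G t hcont k n a ≤ u ↔ rho G t hcont n a ≤ gpt u k := dy_le_u_iff

lemma isStoppingTime_sig (hada : StronglyAdapted ℱ M) (k n : ℕ) :
    IsStoppingTime ℱ (wt (sig G t hcont k n)) := by
  intro u
  simp only [wt, WithTop.coe_le_coe]
  have : {a | sig G t hcont k n a ≤ u} = {a | rho G t hcont n a ≤ gpt u k} := by
    ext a; exact sig_le_iff
  rw [this]
  have h := isStoppingTime_rho (G := G) (t := t) (hcont := hcont) hada n (gpt u k)
  simp only [wt, WithTop.coe_le_coe] at h
  exact ℱ.mono (gpt_le u k) _ h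

lemma rho_le_sig (k n : ℕ) (a : α) : rho G t hcont n a ≤ sig G t hcont k n a := le_dy _ _

lemma sig_le_T (k n : ℕ) (a : α) : sig G t hcont k n a ≤ t + 1 :=
  (dy_le_add_one _ _).trans (add_le_add_left (rho_le_t n a) 1)

lemma countable_range_sig (k n : ℕ) : (Set.range (sig G t hcont k n)).Countable := by
  refine (Set.countable_range fun m : ℕ => (m : ℝ≥0) / 2 ^ k).mono ?_
  rintro x ⟨a, rfl⟩
  exact ⟨⌈rho G t hcont n a * 2 ^ k⌉₊, rfl⟩

lemma countable_range_wt_sig (k n : ℕ) : (Set.range (wt (sig G t hcont k n))).Countable := by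
  rw [show wt (sig G t hcont k n) = (fun x : ℝ≥0 => (x : WithTop ℝ≥0)) ∘ sig G t hcont k n from rfl,
    Set.range_comp]
  exact (countable_range_sig k n).image _

lemma tendsto_sig (n : ℕ) (a : α) :
    Tendsto (fun k => sig G t hcont k n a) atTop (nhds (rho G t hcont n a)) :=
  tendsto_dy _

/-- Key measurability: an `F_τ`-measurable set intersected with `{τ < t}` is in `F t`. -/
lemma measurableSet_F_inter_lt {n : ℕ} {A : Set Omega}
    (hA : MeasurableSet[(G.isStopping n).measurableSpace] A) (t : ℝ≥0) :
    MeasurableSet[F (t : ℝ≥0∞)] (A ∩ {ω | G.τ n ω < (t : ℝ≥0∞)}) := by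
  have hA' := stop_set hA
  rcases eq_or_ne t 0 with rfl | ht0
  · have : A ∩ {ω | G.τ n ω < ((0 : ℝ≥0) : ℝ≥0∞)} = ∅ := by
      ext ω; simp
    rw [this]; exact @MeasurableSet.empty Omega (F _)
  have htpos : 0 < t := pos_iff_ne_zero.mpr ht0
  set s : ℕ → ℝ≥0 := fun j => t - t / ((j : ℝ≥0) + 2) with hs
  have hsle : ∀ j, s j ≤ t := fun j => tsub_le_self
  have hseq : A ∩ {ω | G.τ n ω < (t : ℝ≥0∞)} = ⋃ j : ℕ, A ∩ {ω | G.τ n ω ≤ ((s j : ℝ≥0) : ℝ≥0∞)} := by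
    ext ω
    simp only [Set.mem_inter_iff, Set.mem_setOf_eq, Set.mem_iUnion]
    constructor
    · rintro ⟨hωA, hωlt⟩
      have hne : G.τ n ω ≠ ⊤ := hωlt.ne_top
      set x : ℝ≥0 := (G.τ n ω).toNNReal with hx
      have hcoe : G.τ n ω = (x : ℝ≥0∞) := (ENNReal.coe_toNNReal hne).symm
      have hxt : x < t := by rw [hcoe] at hωlt; exact_mod_cast hωlt
      set ε : ℝ≥0 := t - x with hε
      have hεpos : 0 < ε := tsub_pos_of_lt hxt
      set j : ℕ := ⌈(t : ℝ≥0) / ε⌉₊ with hj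
      refine ⟨j, hωA, ?_⟩
      have hlt : t / ((j : ℝ≥0) + 2) < ε := by
        rw [div_lt_iff₀ (by positivity)]
        refine lt_of_eq_of_lt (div_mul_cancel₀ t hεpos.ne').symm ?_
        rw [mul_comm ε]
        refine mul_lt_mul_of_pos_right ?_ hεpos
        calc t / ε ≤ (j : ℝ≥0) := Nat.le_ceil _
          _ < (j : ℝ≥0) + 2 := lt_add_of_pos_right _ (by norm_num)
      have : x ≤ s j := by
        have h1 : t - ε ≤ s j := tsub_le_tsub_left hlt.le t
        have h2 : t - ε = x := by
          rw [hε, tsub_tsub_cancel_of_le hxt.le]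
        rw [← h2]; exact h1
      rw [hcoe]
      exact_mod_cast this
    · rintro ⟨j, hωA, hωle⟩
      refine ⟨hωA, lt_of_le_of_lt hωle ?_⟩
      have : s j < t := by
        refine tsub_lt_self htpos ?_
        positivity
      exact_mod_cast this
  rw [hseq]
  refine MeasurableSet.iUnion fun j => ?_
  exact F_mono (by exact_mod_cast hsle j : ((s j : ℝ≥0) : ℝ≥0∞) ≤ (t : ℝ≥0∞)) _ (hA' _)


/-- The bet of strategy `G` at step `n`, cut off on `{τ_n ≥ t}`. -/
def betI (G : SimpleStrategy) (t : ℝ≥0) (hcont : ∀ a, Continuous fun s => M s a)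
    (n : ℕ) (a : α) : ℝ :=
  if G.τ n (Phi M hcont a) < (t : ℝ≥0∞) then G.bet n (Phi M hcont a) else 0

lemma rho_le_iff {n : ℕ} {a : α} {u : ℝ≥0} (h : ¬ t ≤ u) :
    rho G t hcont n a ≤ u ↔ G.τ n (Phi M hcont a) ≤ (u : ℝ≥0∞) := by
  rw [← ENNReal.coe_le_coe, coe_rho]
  constructor
  · intro hh
    rcases min_le_iff.mp hh with hh | hh
    · exact hh
    · exact absurd (ENNReal.coe_le_coe.mp hh) h
  · intro hh
    exact le_trans (min_le_left _ _) hh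

lemma core_measurableSet (hada : StronglyAdapted ℱ M) {n m k : ℕ} (hnm : n ≤ m) {A : Set Omega}
    (hA : MeasurableSet[(G.isStopping n).measurableSpace] A) :
    MeasurableSet[(isStoppingTime_sig (G := G) (t := t) (hcont := hcont) hada k m).measurableSpace]
      (Phi M hcont ⁻¹' (A ∩ {ω | G.τ n ω < (t : ℝ≥0∞)})) := by
  rw [IsStoppingTime.measurableSet]
  refine ⟨le_iSup (fun s => ℱ s) t _ (measurableSet_F_pullback (fun v => (hada v).measurable)
    ℱ.mono' t (measurableSet_F_inter_lt hA t)), fun u => ?_⟩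
  simp only [wt, WithTop.coe_le_coe]
  set g := gpt u k with hg
  have hgu : g ≤ u := gpt_le u k
  have hA' := stop_set hA
  by_cases hgt : t ≤ g
  · have h1 : {a : α | sig G t hcont k m a ≤ u} = Set.univ :=
      Set.eq_univ_of_forall fun a => sig_le_iff.mpr ((rho_le_t m a).trans hgt)
    rw [h1, Set.inter_univ]
    refine ℱ.mono (hgt.trans hgu) _ ?_
    exact measurableSet_F_pullback (fun v => (hada v).measurable) ℱ.mono' t
      (measurableSet_F_inter_lt hA t)
  · have hglt : (g : ℝ≥0∞) < (t : ℝ≥0∞) := by exact_mod_cast not_le.mp hgt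
    have h2 : Phi M hcont ⁻¹' (A ∩ {ω | G.τ n ω < (t : ℝ≥0∞)}) ∩
        {a : α | sig G t hcont k m a ≤ u}
        = Phi M hcont ⁻¹' ((A ∩ {ω | G.τ n ω ≤ (g : ℝ≥0∞)}) ∩ {ω | G.τ m ω ≤ (g : ℝ≥0∞)}) := by
      ext a
      simp only [Set.mem_inter_iff, Set.mem_preimage, Set.mem_setOf_eq]
      rw [sig_le_iff, rho_le_iff hgt]
      constructor
      · rintro ⟨⟨hA1, _⟩, h3⟩
        exact ⟨⟨hA1, (tau_mono G _ hnm).trans h3⟩, h3⟩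
      · rintro ⟨⟨hA1, h4⟩, h3⟩
        exact ⟨⟨hA1, lt_of_le_of_lt h4 hglt⟩, h3⟩
    rw [h2]
    refine ℱ.mono hgu _ ?_
    refine measurableSet_F_pullback (fun v => (hada v).measurable) ℱ.mono' g ?_
    exact ((hA' _).inter (isStop' G m _))

lemma betI_measurable_sig (hada : StronglyAdapted ℱ M) {n m k : ℕ} (hnm : n ≤ m) :
    Measurable[(isStoppingTime_sig (G := G) (t := t) (hcont := hcont) hada k m).measurableSpace]
      (betI G t hcont n) := by
  have key : ∀ B : Set ℝ, MeasurableSet B → (0:ℝ) ∉ B →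
      MeasurableSet[(isStoppingTime_sig (G := G) (t := t) (hcont := hcont)
        hada k m).measurableSpace] (betI G t hcont n ⁻¹' B) := by
    intro B hB h0
    have : betI G t hcont n ⁻¹' B
        = Phi M hcont ⁻¹' ((G.bet n ⁻¹' B) ∩ {ω | G.τ n ω < (t : ℝ≥0∞)}) := by
      ext a
      simp only [Set.mem_preimage, Set.mem_inter_iff, Set.mem_setOf_eq, betI]
      by_cases hc : G.τ n (Phi M hcont a) < (t : ℝ≥0∞)
      · simp [hc]
      · simp [hc, h0]
    rw [this]
    exact core_measurableSet hada hnm (G.bet_measurable n hB)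
  intro B hB
  by_cases h0 : (0:ℝ) ∈ B
  · have : betI G t hcont n ⁻¹' B = (betI G t hcont n ⁻¹' Bᶜ)ᶜ := by
      rw [← Set.preimage_compl, compl_compl]
    rw [this]
    exact (key Bᶜ hB.compl (by simp [h0])).compl
  · exact key B hB h0

lemma betI_bound (n : ℕ) : ∃ C : ℝ, ∀ a : α, ‖betI G t hcont n a‖ ≤ C := by
  obtain ⟨C, hC⟩ := G.bet_bounded n
  refine ⟨max C 0, fun a => ?_⟩
  rw [betI]
  by_cases hc : G.τ n (Phi M hcont a) < (t : ℝ≥0∞)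
  · simp only [hc, if_true]
    exact (hC _).trans (le_max_left _ _)
  · simp [hc]

lemma integral_betI_mul_sig [IsProbabilityMeasure μ] (hmart : Martingale M ℱ μ)
    (hcont : ∀ a, Continuous fun s => M s a) {n m k : ℕ} (hnm : n ≤ m) :
    ∫ a, betI G t hcont n a * stoppedValue M (wt (sig G t hcont k m)) a ∂μ
      = ∫ a, betI G t hcont n a * M (t + 1) a ∂μ := by
  have hσ := isStoppingTime_sig (G := G) (t := t) (hcont := hcont) hmart.stronglyAdapted k m
  have hσle : ∀ a, wt (sig G t hcont k m) a ≤ ((t + 1 : ℝ≥0) : WithTop ℝ≥0) :=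
    fun a => WithTop.coe_le_coe.mpr (sig_le_T k m a)
  have hms_le : hσ.measurableSpace ≤ mα := hσ.measurableSpace_le_of_le hσle
  haveI : SigmaFinite (μ.trim hms_le) := inferInstance
  have hsv : stoppedValue M (wt (sig G t hcont k m)) =ᵐ[μ] μ[M (t + 1)|hσ.measurableSpace] :=
    hmart.stoppedValue_ae_eq_condExp_of_le_const_of_countable_range hσ hσle
      (countable_range_wt_sig k m)
  have hbetI : StronglyMeasurable[hσ.measurableSpace] (betI G t hcont n) :=
    (betI_measurable_sig hmart.stronglyAdapted hnm).stronglyMeasurable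
  have hbdd := betI_bound (G := G) (t := t) (hcont := hcont) (α := α) n
  have hMT : Integrable (M (t + 1)) μ := hmart.integrable (t + 1)
  have h1 : Integrable (fun a => betI G t hcont n a * M (t + 1) a) μ :=
    hMT.bdd_mul ((hbetI.mono hms_le).aestronglyMeasurable) (ae_of_all _ hbdd.choose_spec)
  calc ∫ a, betI G t hcont n a * stoppedValue M (wt (sig G t hcont k m)) a ∂μ
      = ∫ a, betI G t hcont n a * (μ[M (t + 1)|hσ.measurableSpace]) a ∂μ := by
        refine integral_congr_ae ?_
        filter_upwards [hsv] with a ha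
        rw [ha]
    _ = ∫ a, (μ[(fun x => betI G t hcont n x * M (t + 1) x)|hσ.measurableSpace]) a ∂μ := by
        refine (integral_congr_ae ?_).symm
        have h1' : Integrable (betI G t hcont n * M (t + 1)) μ := h1
        filter_upwards [condExp_mul_of_stronglyMeasurable_left hbetI h1' hMT] with a ha
        show (μ[betI G t hcont n * M (t + 1)|hσ.measurableSpace]) a = _
        rw [ha]; rfl
    _ = ∫ a, betI G t hcont n a * M (t + 1) a ∂μ := integral_condExp hms_le


lemma nonempty_of_prob [IsProbabilityMeasure μ] : Nonempty α := by
  by_contra h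
  haveI := not_nonempty_iff.mp h
  have h0 : μ Set.univ = 0 := by
    have : (Set.univ : Set α) = ∅ := Set.eq_empty_of_isEmpty _
    rw [this, measure_empty]
  rw [measure_univ] at h0
  exact one_ne_zero h0

lemma sv_sig_condexp [IsProbabilityMeasure μ] (hmart : Martingale M ℱ μ)
    (hcont : ∀ a, Continuous fun s => M s a) (k m : ℕ) :
    stoppedValue M (wt (sig G t hcont k m)) =ᵐ[μ]
      μ[M (t + 1)|(isStoppingTime_sig (G := G) (t := t) (hcont := hcont)
        hmart.stronglyAdapted k m).measurableSpace] := by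
  have hσ := isStoppingTime_sig (G := G) (t := t) (hcont := hcont) hmart.stronglyAdapted k m
  have hσle : ∀ a, wt (sig G t hcont k m) a ≤ ((t + 1 : ℝ≥0) : WithTop ℝ≥0) :=
    fun a => WithTop.coe_le_coe.mpr (sig_le_T k m a)
  haveI : SigmaFinite (μ.trim (hσ.measurableSpace_le_of_le hσle)) := inferInstance
  exact hmart.stoppedValue_ae_eq_condExp_of_le_const_of_countable_range hσ hσle
    (countable_range_wt_sig k m)

lemma integral_betI_mul_rho [IsProbabilityMeasure μ] (hmart : Martingale M ℱ μ)
    (hcont : ∀ a, Continuous fun s => M s a) {n m : ℕ} (hnm : n ≤ m) :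
    ∫ a, betI G t hcont n a * stoppedValue M (wt (rho G t hcont m)) a ∂μ
      = ∫ a, betI G t hcont n a * M (t + 1) a ∂μ := by
  haveI : Nonempty α := nonempty_of_prob (μ := μ)
  have hprog : ProgMeasurable ℱ M := hmart.stronglyAdapted.progMeasurable_of_continuous hcont
  set f : ℕ → α → ℝ := fun k => stoppedValue M (wt (sig G t hcont k m)) with hf
  set g : α → ℝ := stoppedValue M (wt (rho G t hcont m)) with hg
  have hσ : ∀ k, IsStoppingTime ℱ (wt (sig G t hcont k m)) :=
    fun k => isStoppingTime_sig hmart.stronglyAdapted k m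
  have hσle : ∀ k a, wt (sig G t hcont k m) a ≤ ((t + 1 : ℝ≥0) : WithTop ℝ≥0) :=
    fun k a => WithTop.coe_le_coe.mpr (sig_le_T k m a)
  have hmsle : ∀ k, (hσ k).measurableSpace ≤ mα :=
    fun k => (hσ k).measurableSpace_le_of_le (hσle k)
  have hρ : IsStoppingTime ℱ (wt (rho G t hcont m)) := isStoppingTime_rho hmart.stronglyAdapted m
  have hfm : ∀ k, Measurable (f k) := fun k =>
    (measurable_stoppedValue hprog (hσ k)).mono (hmsle k) le_rfl
  have hgm : Measurable g :=
    (measurable_stoppedValue hprog hρ).mono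
      (hρ.measurableSpace_le_of_le fun a => WithTop.coe_le_coe.mpr (rho_le_t m a)) le_rfl
  have hfaesm : ∀ k, AEStronglyMeasurable (f k) μ := fun k => (hfm k).aestronglyMeasurable
  have hptw : ∀ a, Tendsto (fun k => f k a) atTop (nhds (g a)) := fun a =>
    (((hcont a).tendsto (rho G t hcont m a)).comp (tendsto_sig m a))
  have hsv := sv_sig_condexp (G := G) (t := t) hmart hcont
  have hcondUI : UniformIntegrable
      (fun k => μ[M (t + 1)|(hσ k).measurableSpace]) 1 μ :=
    (hmart.integrable (t + 1)).uniformIntegrable_condExp hmsle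
  have hui : UnifIntegrable f 1 μ :=
    hcondUI.2.1.ae_eq fun k => (hsv k m).symm
  obtain ⟨C, hC⟩ := hcondUI.2.2
  have hfi : ∀ k, Integrable (f k) μ :=
    fun k => integrable_condExp.congr (hsv k m).symm
  have hg_mem : MemLp g 1 μ := by
    refine ⟨hgm.aestronglyMeasurable, ?_⟩
    have h1 : eLpNorm g 1 μ ≤ atTop.liminf fun k => eLpNorm (f k) 1 μ :=
      Lp.eLpNorm_lim_le_liminf_eLpNorm hfaesm g (Filter.Eventually.of_forall hptw)
    have h2 : ∀ k, eLpNorm (f k) 1 μ ≤ (C : ℝ≥0∞) := fun k => by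
      rw [eLpNorm_congr_ae (hsv k m)]; exact hC k
    have h3 : (atTop.liminf fun k => eLpNorm (f k) 1 μ) ≤ (C : ℝ≥0∞) := by
      refine le_trans (Filter.liminf_le_liminf (Filter.Eventually.of_forall h2)) ?_
      simp [Filter.liminf_const]
    exact lt_of_le_of_lt (h1.trans h3) ENNReal.coe_lt_top
  have hgi : Integrable g μ := memLp_one_iff_integrable.mp hg_mem
  have hL1 : Tendsto (fun k => eLpNorm (f k - g) 1 μ) atTop (nhds 0) :=
    tendsto_Lp_finite_of_tendstoInMeasure le_rfl ENNReal.one_ne_top hfaesm hg_mem hui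
      (tendstoInMeasure_of_tendsto_ae hfaesm (Filter.Eventually.of_forall hptw))
  obtain ⟨Cb, hCb⟩ := betI_bound (G := G) (t := t) (hcont := hcont) (α := α) n
  have hCb0 : 0 ≤ Cb := le_trans (norm_nonneg _) (hCb (Classical.arbitrary α))
  have hbaesm : AEStronglyMeasurable (betI G t hcont n) μ := by
    have := (betI_measurable_sig (G := G) (t := t) (hcont := hcont)
      hmart.stronglyAdapted (k := 0) hnm).mono (hmsle 0) le_rfl
    exact this.aestronglyMeasurable
  have hbfi : ∀ k, Integrable (fun a => betI G t hcont n a * f k a) μ :=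
    fun k => (hfi k).bdd_mul hbaesm (ae_of_all _ hCb)
  have hbgi : Integrable (fun a => betI G t hcont n a * g a) μ :=
    hgi.bdd_mul hbaesm (ae_of_all _ hCb)
  have htendR : Tendsto (fun k => Cb * (eLpNorm (f k - g) 1 μ).toReal) atTop (nhds 0) := by
    have := (ENNReal.tendsto_toReal (by simp : (0:ℝ≥0∞) ≠ ⊤)).comp hL1
    simpa using this.const_mul Cb
  have htend : Tendsto (fun k => ∫ a, betI G t hcont n a * f k a ∂μ) atTop
      (nhds (∫ a, betI G t hcont n a * g a ∂μ)) := by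
    rw [tendsto_iff_dist_tendsto_zero]
    refine squeeze_zero (fun k => dist_nonneg) (fun k => ?_) htendR
    rw [dist_eq_norm, ← integral_sub (hbfi k) hbgi]
    have heq : (fun a => betI G t hcont n a * f k a - betI G t hcont n a * g a)
        = fun a => betI G t hcont n a * (f k a - g a) := by
      funext a; ring
    rw [heq]
    calc ‖∫ a, betI G t hcont n a * (f k a - g a) ∂μ‖
        ≤ ∫ a, ‖betI G t hcont n a * (f k a - g a)‖ ∂μ := norm_integral_le_integral_norm _
      _ ≤ ∫ a, Cb * ‖f k a - g a‖ ∂μ := by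
          refine integral_mono ?_ ?_ ?_
          · exact (((hfi k).sub hgi).bdd_mul hbaesm (ae_of_all _ hCb)).norm
          · exact (((hfi k).sub hgi).norm.const_mul Cb)
          · intro a
            show ‖betI G t hcont n a * (f k a - g a)‖ ≤ Cb * ‖f k a - g a‖
            rw [norm_mul]
            exact mul_le_mul_of_nonneg_right (hCb a) (norm_nonneg _)
      _ = Cb * ∫ a, ‖f k a - g a‖ ∂μ := integral_const_mul _ _
      _ = Cb * (eLpNorm (f k - g) 1 μ).toReal := by
          congr 1
          have hae : AEStronglyMeasurable (f k - g) μ := ((hfi k).sub hgi).aestronglyMeasurable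
          have h5 := integral_norm_eq_lintegral_enorm hae
          rw [eLpNorm_one_eq_lintegral_enorm]
          exact h5
  have hconst : ∀ k, ∫ a, betI G t hcont n a * f k a ∂μ
      = ∫ a, betI G t hcont n a * M (t + 1) a ∂μ :=
    fun k => integral_betI_mul_sig hmart hcont hnm
  rw [show (fun k => ∫ a, betI G t hcont n a * f k a ∂μ)
      = fun _ => ∫ a, betI G t hcont n a * M (t + 1) a ∂μ from funext hconst] at htend
  exact (tendsto_nhds_unique tendsto_const_nhds htend).symm


lemma betI_measurable_amb (hada : StronglyAdapted ℱ M) (n : ℕ) :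
    Measurable[mα] (betI G t hcont n) :=
  ((betI_measurable_sig (G := G) (t := t) (hcont := hcont) hada (k := 0) (le_refl n)).mono
    ((isStoppingTime_sig hada 0 n).measurableSpace_le_of_le
      (fun a => WithTop.coe_le_coe.mpr (sig_le_T 0 n a))) le_rfl)

lemma sv_rho_measurable (hada : StronglyAdapted ℱ M) (hcont : ∀ a, Continuous fun s => M s a) (m : ℕ) :
    Measurable[mα] (stoppedValue M (wt (rho G t hcont m))) :=
  (measurable_stoppedValue (hada.progMeasurable_of_continuous hcont)
    (isStoppingTime_rho hada m)).mono
    ((isStoppingTime_rho hada m).measurableSpace_le_of_le fun a => WithTop.coe_le_coe.mpr (rho_le_t m a)) le_rfl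

lemma sv_rho_integrable [IsProbabilityMeasure μ] (hmart : Martingale M ℱ μ)
    (hcont : ∀ a, Continuous fun s => M s a) (m : ℕ) :
    Integrable (stoppedValue M (wt (rho G t hcont m))) μ := by
  set f : ℕ → α → ℝ := fun k => stoppedValue M (wt (sig G t hcont k m)) with hf
  set g : α → ℝ := stoppedValue M (wt (rho G t hcont m)) with hg
  have hσ : ∀ k, IsStoppingTime ℱ (wt (sig G t hcont k m)) :=
    fun k => isStoppingTime_sig hmart.stronglyAdapted k m
  have hmsle : ∀ k, (hσ k).measurableSpace ≤ mα :=
    fun k => (hσ k).measurableSpace_le_of_le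
        (fun a => WithTop.coe_le_coe.mpr (sig_le_T k m a))
  have hfaesm : ∀ k, AEStronglyMeasurable (f k) μ := fun k =>
    ((measurable_stoppedValue (hmart.stronglyAdapted.progMeasurable_of_continuous hcont) (hσ k)).mono
      (hmsle k) le_rfl).aestronglyMeasurable
  have hptw : ∀ a, Tendsto (fun k => f k a) atTop (nhds (g a)) := fun a =>
    (((hcont a).tendsto (rho G t hcont m a)).comp (tendsto_sig m a))
  have hsv := sv_sig_condexp (G := G) (t := t) hmart hcont
  have hcondUI : UniformIntegrable
      (fun k => μ[M (t + 1)|(hσ k).measurableSpace]) 1 μ :=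
    (hmart.integrable (t + 1)).uniformIntegrable_condExp hmsle
  obtain ⟨C, hC⟩ := hcondUI.2.2
  refine memLp_one_iff_integrable.mp ⟨(sv_rho_measurable hmart.stronglyAdapted hcont m).aestronglyMeasurable, ?_⟩
  have h1 : eLpNorm g 1 μ ≤ atTop.liminf fun k => eLpNorm (f k) 1 μ :=
    Lp.eLpNorm_lim_le_liminf_eLpNorm hfaesm g (Filter.Eventually.of_forall hptw)
  have h2 : ∀ k, eLpNorm (f k) 1 μ ≤ (C : ℝ≥0∞) := fun k => by
    rw [eLpNorm_congr_ae (hsv k m)]; exact hC k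
  have h3 : (atTop.liminf fun k => eLpNorm (f k) 1 μ) ≤ (C : ℝ≥0∞) := by
    refine le_trans (Filter.liminf_le_liminf (Filter.Eventually.of_forall h2)) ?_
    simp [Filter.liminf_const]
  exact lt_of_le_of_lt (h1.trans h3) ENNReal.coe_lt_top

lemma bet_comp_measurable (hada : StronglyAdapted ℱ M) (n : ℕ) :
    Measurable[mα] fun a => G.bet n (Phi M hcont a) := by
  intro B hB
  have h1 : (fun a => G.bet n (Phi M hcont a)) ⁻¹' B = Phi M hcont ⁻¹' (G.bet n ⁻¹' B) := rfl
  rw [h1]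
  refine measurableSet_Ftop_pullback (fun v => ((hada v).measurable).mono (ℱ.le v) le_rfl) ?_
  exact stoppingSpace_le_top (G.isStopping n) _ (G.bet_measurable n hB)

lemma term_eq_betI (n : ℕ) (a : α) :
    G.bet n (Phi M hcont a) * (stoppedValue M (wt (rho G t hcont (n + 1))) a
        - stoppedValue M (wt (rho G t hcont n)) a)
      = betI G t hcont n a * stoppedValue M (wt (rho G t hcont (n + 1))) a
        - betI G t hcont n a * stoppedValue M (wt (rho G t hcont n)) a := by
  by_cases hc : G.τ n (Phi M hcont a) < (t : ℝ≥0∞)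
  · rw [betI, if_pos hc, mul_sub]
  · have h1 : rho G t hcont n a = t := by
      have : (rho G t hcont n a : ℝ≥0∞) = (t : ℝ≥0∞) := by
        rw [coe_rho]; exact min_eq_right (not_lt.mp hc)
      exact_mod_cast this
    have h2 : rho G t hcont (n + 1) a = t := by
      have : (rho G t hcont (n + 1) a : ℝ≥0∞) = (t : ℝ≥0∞) := by
        rw [coe_rho]
        exact min_eq_right ((not_lt.mp hc).trans (tau_mono G _ (Nat.le_succ n)))
      exact_mod_cast this
    have h3 : stoppedValue M (wt (rho G t hcont (n + 1))) a = stoppedValue M (wt (rho G t hcont n)) a := by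
      show M (rho G t hcont (n + 1) a) a = M (rho G t hcont n a) a
      rw [h1, h2]
    rw [betI, if_neg hc, h3]
    ring

lemma integrable_term [IsProbabilityMeasure μ] (hmart : Martingale M ℱ μ)
    (hcont : ∀ a, Continuous fun s => M s a) (n : ℕ) :
    Integrable (fun a => G.bet n (Phi M hcont a) * (stoppedValue M (wt (rho G t hcont (n + 1))) a
      - stoppedValue M (wt (rho G t hcont n)) a)) μ := by
  have heq : (fun a => G.bet n (Phi M hcont a) * (stoppedValue M (wt (rho G t hcont (n + 1))) a
      - stoppedValue M (wt (rho G t hcont n)) a))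
      = fun a => betI G t hcont n a * stoppedValue M (wt (rho G t hcont (n + 1))) a
        - betI G t hcont n a * stoppedValue M (wt (rho G t hcont n)) a := funext fun a => term_eq_betI n a
  rw [heq]
  have hbaesm : AEStronglyMeasurable (betI G t hcont n) μ :=
    (betI_measurable_amb hmart.stronglyAdapted n).aestronglyMeasurable
  exact ((sv_rho_integrable hmart hcont (n + 1)).bdd_mul hbaesm (ae_of_all _ (betI_bound n).choose_spec)).sub
    ((sv_rho_integrable hmart hcont n).bdd_mul hbaesm (ae_of_all _ (betI_bound n).choose_spec))

lemma integral_term_zero [IsProbabilityMeasure μ] (hmart : Martingale M ℱ μ)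
    (hcont : ∀ a, Continuous fun s => M s a) (n : ℕ) :
    ∫ a, G.bet n (Phi M hcont a) * (stoppedValue M (wt (rho G t hcont (n + 1))) a
      - stoppedValue M (wt (rho G t hcont n)) a) ∂μ = 0 := by
  have heq : (fun a => G.bet n (Phi M hcont a) * (stoppedValue M (wt (rho G t hcont (n + 1))) a
      - stoppedValue M (wt (rho G t hcont n)) a))
      = fun a => betI G t hcont n a * stoppedValue M (wt (rho G t hcont (n + 1))) a
        - betI G t hcont n a * stoppedValue M (wt (rho G t hcont n)) a := funext fun a => term_eq_betI n a
  rw [heq]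
  have hbaesm : AEStronglyMeasurable (betI G t hcont n) μ :=
    (betI_measurable_amb hmart.stronglyAdapted n).aestronglyMeasurable
  rw [integral_sub ((sv_rho_integrable hmart hcont (n + 1)).bdd_mul hbaesm (ae_of_all _ (betI_bound n).choose_spec))
    ((sv_rho_integrable hmart hcont n).bdd_mul hbaesm (ae_of_all _ (betI_bound n).choose_spec))]
  rw [integral_betI_mul_rho hmart hcont (Nat.le_succ n),
    integral_betI_mul_rho hmart hcont (le_refl n)]
  ring

/-- Partial sums of the simple capital process along the path of `a`. -/
def Kpart (G : SimpleStrategy) (c : ℝ) (t : ℝ≥0)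
    (hcont : ∀ a, Continuous fun s => M s a) (N : ℕ) (a : α) : ℝ :=
  c + ∑ n ∈ Finset.range N, G.bet n (Phi M hcont a)
    * (stoppedValue M (wt (rho G t hcont (n + 1))) a - stoppedValue M (wt (rho G t hcont n)) a)

lemma Kpart_measurable (hada : StronglyAdapted ℱ M) (hcont : ∀ a, Continuous fun s => M s a)
    (c : ℝ) (N : ℕ) : Measurable[mα] (Kpart G c t hcont N) := by
  refine measurable_const.add (Finset.measurable_sum _ fun n _ => ?_)
  exact (bet_comp_measurable hada n).mul
    ((sv_rho_measurable hada hcont (n + 1)).sub (sv_rho_measurable hada hcont n))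

lemma Kpart_integrable [IsProbabilityMeasure μ] (hmart : Martingale M ℱ μ)
    (hcont : ∀ a, Continuous fun s => M s a) (c : ℝ) (N : ℕ) :
    Integrable (Kpart G c t hcont N) μ :=
  (integrable_const c).add (integrable_finset_sum _ fun n _ => integrable_term hmart hcont n)

lemma integral_Kpart [IsProbabilityMeasure μ] (hmart : Martingale M ℱ μ)
    (hcont : ∀ a, Continuous fun s => M s a) (c : ℝ) (N : ℕ) :
    ∫ a, Kpart G c t hcont N a ∂μ = c := by
  have : ∫ a, Kpart G c t hcont N a ∂μ
      = ∫ a, c ∂μ + ∫ a, (∑ n ∈ Finset.range N, G.bet n (Phi M hcont a)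
        * (stoppedValue M (wt (rho G t hcont (n + 1))) a - stoppedValue M (wt (rho G t hcont n)) a)) ∂μ :=
    integral_add (integrable_const c)
      (integrable_finset_sum _ fun n _ => integrable_term hmart hcont n)
  rw [this, integral_finset_sum _ fun n _ => integrable_term hmart hcont n]
  rw [Finset.sum_congr rfl fun n _ => integral_term_zero hmart hcont n]
  simp


lemma evalE_eq_sv (n : ℕ) (a : α) :
    evalE (Phi M hcont a) (G.τ n (Phi M hcont a) ⊓ (t : ℝ≥0∞))
      = stoppedValue M (wt (rho G t hcont n)) a := rfl

lemma Kpart_eq_simpleCapital (c : ℝ) (N : ℕ) (a : α) :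
    Kpart G c t hcont N a = simpleCapital G c (rho G t hcont N a) (Phi M hcont a) := by
  set ω := Phi M hcont a with hω
  set t' := rho G t hcont N a with ht'
  have hcoe : (t' : ℝ≥0∞) = G.τ N ω ⊓ (t : ℝ≥0∞) := coe_rho N a
  rw [simpleCapital, Kpart]
  congr 1
  rw [tsum_eq_sum (s := Finset.range N) ?_]
  · refine Finset.sum_congr rfl fun n hn => ?_
    have hnN : n ≤ N := (Finset.mem_range.mp hn).le
    have hn1N : n + 1 ≤ N := Finset.mem_range.mp hn
    have hmin : ∀ {j : ℕ}, j ≤ N → G.τ j ω ⊓ (t' : ℝ≥0∞) = G.τ j ω ⊓ (t : ℝ≥0∞) := by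
      intro j hj
      rw [hcoe, ← inf_assoc, inf_eq_left.mpr (tau_mono G ω hj)]
    rw [hmin hn1N, hmin hnN, evalE_eq_sv, evalE_eq_sv]
  · intro n hn
    have hNn : N ≤ n := not_lt.mp fun h => hn (Finset.mem_range.mpr h)
    have hle : ∀ {j : ℕ}, N ≤ j → (t' : ℝ≥0∞) ≤ G.τ j ω := by
      intro j hj
      rw [hcoe]
      exact (min_le_left _ _).trans (tau_mono G ω hj)
    rw [min_eq_right (hle hNn), min_eq_right (hle (hNn.trans (Nat.le_succ n)))]
    simp

lemma Kpart_nonneg {c : ℝ} (hnn : ∀ (u : ℝ≥0) (ω : Omega), 0 ≤ simpleCapital G c u ω)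
    (N : ℕ) (a : α) : 0 ≤ Kpart G c t hcont N a := by
  rw [Kpart_eq_simpleCapital]
  exact hnn _ _

lemma Kpart_tendsto (c : ℝ) (a : α) :
    Tendsto (fun N => Kpart G c t hcont N a) atTop
      (nhds (simpleCapital G c t (Phi M hcont a))) := by
  set ω := Phi M hcont a with hω
  obtain ⟨N₀, hN₀⟩ := eventually_atTop.mp ((G.tendsto_top ω).eventually
    (isOpen_Ioi.mem_nhds (show (t : ℝ≥0∞) < ⊤ from ENNReal.coe_lt_top)))
  have hrho : ∀ n, N₀ ≤ n → rho G t hcont n a = t := by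
    intro n hn
    have : (rho G t hcont n a : ℝ≥0∞) = (t : ℝ≥0∞) := by
      rw [coe_rho]
      exact min_eq_right (le_of_lt (hN₀ n hn))
    exact_mod_cast this
  have hterm0 : ∀ n, N₀ ≤ n → G.bet n ω * (stoppedValue M (wt (rho G t hcont (n + 1))) a
      - stoppedValue M (wt (rho G t hcont n)) a) = 0 := by
    intro n hn
    have : stoppedValue M (wt (rho G t hcont (n + 1))) a = stoppedValue M (wt (rho G t hcont n)) a := by
      show M (rho G t hcont (n + 1) a) a = M (rho G t hcont n a) a
      rw [hrho n hn, hrho (n + 1) (hn.trans (Nat.le_succ n))]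
    rw [this]; simp
  have hKeq : ∀ N, N₀ ≤ N → Kpart G c t hcont N a = Kpart G c t hcont N₀ a := by
    intro N hN
    rw [Kpart, Kpart]
    congr 1
    refine (Finset.sum_subset (Finset.range_subset_range.mpr hN) fun n _ hn => ?_).symm
    exact hterm0 n (not_lt.mp fun h => hn (Finset.mem_range.mpr h))
  have hcap : simpleCapital G c t ω = Kpart G c t hcont N₀ a := by
    rw [simpleCapital, Kpart]
    congr 1
    rw [tsum_eq_sum (s := Finset.range N₀) ?_]
    · exact Finset.sum_congr rfl fun n _ => by rw [evalE_eq_sv, evalE_eq_sv]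
    · intro n hn
      have hNn : N₀ ≤ n := not_lt.mp fun h => hn (Finset.mem_range.mpr h)
      rw [evalE_eq_sv, evalE_eq_sv]
      exact hterm0 n hNn
  rw [hcap]
  exact tendsto_atTop_of_eventually_const hKeq

lemma measurable_simpleCapital (hada : StronglyAdapted ℱ M)
    (hcont : ∀ a, Continuous fun s => M s a) (c : ℝ) :
    Measurable[mα] fun a => simpleCapital G c t (Phi M hcont a) := by
  refine measurable_of_tendsto_metrizable (f := fun N => Kpart G c t hcont N)
    (fun N => Kpart_measurable hada hcont c N) ?_
  rw [tendsto_pi_nhds]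
  exact fun a => Kpart_tendsto c a

lemma lintegral_simpleCapital_le [IsProbabilityMeasure μ] (hmart : Martingale M ℱ μ)
    (hcont : ∀ a, Continuous fun s => M s a) {c : ℝ}
    (hnn : ∀ (u : ℝ≥0) (ω : Omega), 0 ≤ simpleCapital G c u ω) :
    ∫⁻ a, ENNReal.ofReal (simpleCapital G c t (Phi M hcont a)) ∂μ ≤ ENNReal.ofReal c := by
  have hKm : ∀ N, Measurable fun a => ENNReal.ofReal (Kpart G c t hcont N a) :=
    fun N => ENNReal.measurable_ofReal.comp (Kpart_measurable hmart.stronglyAdapted hcont c N)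
  have hptw : ∀ a, ENNReal.ofReal (simpleCapital G c t (Phi M hcont a))
      = atTop.liminf fun N => ENNReal.ofReal (Kpart G c t hcont N a) := fun a =>
    ((ENNReal.continuous_ofReal.tendsto _).comp (Kpart_tendsto c a)).liminf_eq.symm
  calc ∫⁻ a, ENNReal.ofReal (simpleCapital G c t (Phi M hcont a)) ∂μ
      = ∫⁻ a, atTop.liminf (fun N => ENNReal.ofReal (Kpart G c t hcont N a)) ∂μ :=
        lintegral_congr fun a => hptw a
    _ ≤ atTop.liminf fun N => ∫⁻ a, ENNReal.ofReal (Kpart G c t hcont N a) ∂μ :=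
        lintegral_liminf_le hKm
    _ = ENNReal.ofReal c := by
        have hval : ∀ N, ∫⁻ a, ENNReal.ofReal (Kpart G c t hcont N a) ∂μ
            = ENNReal.ofReal c := fun N => by
          rw [← ofReal_integral_eq_lintegral_ofReal (Kpart_integrable hmart hcont c N)
            (Filter.Eventually.of_forall fun a => Kpart_nonneg hnn N a),
            integral_Kpart hmart hcont c N]
        rw [funext hval]
        exact Filter.liminf_const _


lemma liminf_coe_nat_le (f : ℝ≥0 → ℝ≥0∞) :
    Filter.liminf f atTop ≤ Filter.liminf (fun j : ℕ => f (j : ℝ≥0)) atTop := by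
  have h1 : Filter.liminf (fun j : ℕ => f (j : ℝ≥0)) atTop
      = Filter.liminf f (Filter.map ((↑) : ℕ → ℝ≥0) atTop) := by
    rw [Filter.liminf, Filter.liminf, Filter.map_map]
    rfl
  rw [h1]
  exact Filter.liminf_le_liminf_of_le tendsto_natCast_atTop_atTop

/-- The trivial strategy: never bets. -/
def trivialStrategy : SimpleStrategy where
  τ := fun n _ => (n : ℝ≥0∞)
  bet := fun _ _ => 0
  isStopping := fun n => isStoppingTime_const FF ((n : ℝ≥0∞))
  mono := fun n x => by show ((n:ℝ≥0∞)) ≤ ((n+1 : ℕ) : ℝ≥0∞); exact_mod_cast Nat.le_succ n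
  tendsto_top := fun _ => ENNReal.tendsto_nat_nhds_top
  bet_measurable := fun _ => measurable_const
  bet_bounded := fun _ => ⟨0, fun ω => by simp⟩

lemma simpleCapital_trivial (c : ℝ) (u : ℝ≥0) (ω : Omega) :
    simpleCapital trivialStrategy c u ω = c := by
  rw [simpleCapital]
  have : ∀ n : ℕ, trivialStrategy.bet n ω *
      (evalE ω (trivialStrategy.τ (n + 1) ω ⊓ (u : ℝ≥0∞))
        - evalE ω (trivialStrategy.τ n ω ⊓ (u : ℝ≥0∞))) = 0 := fun n => by
    show (0:ℝ) * _ = 0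
    rw [zero_mul]
  rw [funext this]
  simp

/-- The trivial positive capital process with initial capital 1. -/
def trivialCapital : PositiveCapital where
  G := fun _ => trivialStrategy
  c := fun n => if n = 0 then 1 else 0
  c_nonneg := fun n => by positivity
  c_summable := summable_of_ne_finset_zero (s := {0}) (by
    intro n hn
    simp only [Finset.mem_singleton] at hn
    simp [hn])
  nonneg := fun n u ω => by
    rw [simpleCapital_trivial]
    positivity

lemma trivialCapital_val (u : ℝ≥0) (ω : Omega) : trivialCapital.val u ω = 1 := by
  rw [PositiveCapital.val]
  have : ∀ n : ℕ, ENNReal.ofReal (simpleCapital (trivialCapital.G n) (trivialCapital.c n) u ω)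
      = if n = 0 then 1 else 0 := fun n => by
    show ENNReal.ofReal (simpleCapital trivialStrategy (if n = 0 then (1:ℝ) else 0) u ω) = _
    rw [simpleCapital_trivial]
    by_cases hn : n = 0 <;> simp [hn]
  rw [funext this]
  exact tsum_ite_eq 0 1

lemma trivialCapital_init : trivialCapital.init = 1 := by
  rw [PositiveCapital.init]
  have : ∀ n : ℕ, ENNReal.ofReal (trivialCapital.c n) = if n = 0 then 1 else 0 := fun n => by
    show ENNReal.ofReal (if n = 0 then (1:ℝ) else 0) = _
    by_cases hn : n = 0 <;> simp [hn]
  rw [funext this]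
  exact tsum_ite_eq 0 1

lemma outerContent_le_one (E : Set Omega) : outerContent E ≤ 1 := by
  rw [outerContent]
  refine iInf_le_of_le trivialCapital (iInf_le_of_le ?_ ?_)
  · intro ω _
    have : (fun u : ℝ≥0 => trivialCapital.val u ω) = fun _ => 1 :=
      funext fun u => trivialCapital_val u ω
    rw [this, Filter.liminf_const]
  · rw [trivialCapital_init]

end Aux15







/-- if the sample paths of some continuous martingale belong to `E` almost
surely, then `P̄(E) = 1`. -/
theorem outerContent_eq_one_of_martingale (E : Set Omega)
    (α : Type) [MeasurableSpace α] (μ : Measure α) [IsProbabilityMeasure μ]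
    (ℱ : Filtration ℝ≥0 (by infer_instance : MeasurableSpace α))
    (M : ℝ≥0 → α → ℝ) (hcont : ∀ a, Continuous fun t => M t a)
    (hmart : Martingale M ℱ μ)
    (hpaths : ∀ᵐ a ∂μ, (⟨fun t => M t a, hcont a⟩ : Omega) ∈ E) :
    outerContent E = 1 := by
  refine le_antisymm (outerContent_le_one E) ?_
  rw [outerContent]
  refine le_iInf fun S => le_iInf fun hS => ?_
  have hval_meas : ∀ u : ℝ≥0, Measurable fun a => S.val u (Phi M hcont a) := by
    intro u
    refine Measurable.ennreal_tsum fun n => ?_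
    exact ENNReal.measurable_ofReal.comp
      (measurable_simpleCapital (G := S.G n) hmart.stronglyAdapted hcont (S.c n))
  have hval_le : ∀ u : ℝ≥0, ∫⁻ a, S.val u (Phi M hcont a) ∂μ ≤ S.init := by
    intro u
    have h1 : ∫⁻ a, S.val u (Phi M hcont a) ∂μ
        = ∑' n, ∫⁻ a, ENNReal.ofReal (simpleCapital (S.G n) (S.c n) u (Phi M hcont a)) ∂μ := by
      rw [show (fun a => S.val u (Phi M hcont a)) = fun a => ∑' n,
        ENNReal.ofReal (simpleCapital (S.G n) (S.c n) u (Phi M hcont a)) from rfl]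
      exact lintegral_tsum fun n => (ENNReal.measurable_ofReal.comp
        (measurable_simpleCapital (G := S.G n) hmart.stronglyAdapted hcont (S.c n))).aemeasurable
    rw [h1, PositiveCapital.init]
    refine ENNReal.tsum_le_tsum fun n => ?_
    exact lintegral_simpleCapital_le hmart hcont (S.nonneg n)
  have hae : ∀ᵐ a ∂μ, (1:ℝ≥0∞) ≤ atTop.liminf fun j : ℕ => S.val (j : ℝ≥0) (Phi M hcont a) := by
    filter_upwards [hpaths] with a ha
    refine (hS (Phi M hcont a) ha).trans ?_
    exact liminf_coe_nat_le fun u => S.val u (Phi M hcont a)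
  calc (1:ℝ≥0∞) = ∫⁻ _, 1 ∂μ := by simp
    _ ≤ ∫⁻ a, atTop.liminf (fun j : ℕ => S.val (j : ℝ≥0) (Phi M hcont a)) ∂μ :=
        lintegral_mono_ae hae
    _ ≤ atTop.liminf fun j : ℕ => ∫⁻ a, S.val (j : ℝ≥0) (Phi M hcont a) ∂μ :=
        lintegral_liminf_le fun j => hval_meas _
    _ ≤ S.init := le_trans (Filter.liminf_le_liminf
        (Filter.Eventually.of_forall fun j => hval_le _)) (by simp [Filter.liminf_const])
end
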